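/- arXiv:1410.4488 — 2 statements merged into one kernel-verified Lean document; each statement's English description precedes it below -/
import Mathlib

section
/- A connected 3-state invertible reversible non-bireversible Mealy automaton generates a free semigroup: if A = (Q, Σ, δ, ρ) is a connected invertible reversible Mealy automaton with |Q| = 3 that is not bireversible, then the map u ↦ ρ_u is injective on nonempty words, i.e., for all u, v ∈ Q⁺, ρ_u = ρ_v implies u = v. -/
/-!
Mealy automata: common definitions.

A Mealy automaton on stateset `Q` and alphabet `Γ` is given by transition
functions `δ : Γ → Q → Q` (for each input letter) and output functions
`ρ : Q → Γ → Γ` (for each state); it has a transition `x —i|j→ y` exactly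
when `δ i x = y` and `ρ x i = j`.
-/

/-- Extended output function `ρ_x : Γ* → Γ*` of a single state. -/
def rhoStar {Q Γ : Type*} (δ : Γ → Q → Q) (ρ : Q → Γ → Γ) : Q → List Γ → List Γ
  | _, [] => []
  | x, i :: s => ρ x i :: rhoStar δ ρ (δ i x) s

/-- `ρ_u : Γ* → Γ*` for a word `u = x₁⋯x_n` of states: `ρ_u = ρ_{x_n} ∘ ⋯ ∘ ρ_{x₁}`. -/
def rhoWord {Q Γ : Type*} (δ : Γ → Q → Q) (ρ : Q → Γ → Γ) : List Q → List Γ → List Γ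
  | [], s => s
  | x :: u, s => rhoWord δ ρ u (rhoStar δ ρ x s)

/-- `ρ_u : Γ → Γ` on single letters (the output function of the power automaton). -/
def rhoLetter {Q Γ : Type*} (ρ : Q → Γ → Γ) : List Q → Γ → Γ
  | [], i => i
  | x :: u, i => rhoLetter ρ u (ρ x i)

/-- Extended transition function `δ_i : Q* → Q*` (the transition function of powers). -/
def deltaStar {Q Γ : Type*} (δ : Γ → Q → Q) (ρ : Q → Γ → Γ) : Γ → List Q → List Q
  | _, [] => []
  | i, x :: u => δ i x :: deltaStar δ ρ (ρ x i) u

/-- Sequential application `δ_s = δ_{s_n} ∘ ⋯ ∘ δ_{s₁}` of the letters of a word `s`. -/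
def applyWord {S Γ : Type*} (d : Γ → S → S) : List Γ → S → S
  | [], x => x
  | i :: s, x => applyWord d s (d i x)

/-- The orbit `{δ_s(x) : s ∈ Γ*}` of a state: for reversible automata this is
exactly the (strongly) connected component of `x`. -/
def orbitOf {S Γ : Type*} (d : Γ → S → S) (x : S) : Set S :=
  {y | ∃ s : List Γ, applyWord d s x = y}

/-- An automaton is invertible when every output function is a permutation. -/
def MInvertible {Q Γ : Type*} (ρ : Q → Γ → Γ) : Prop := ∀ x, Function.Bijective (ρ x)

/-- An automaton is reversible when every transition function is a permutation. -/
def MReversible {Q Γ : Type*} (δ : Γ → Q → Q) : Prop := ∀ i, Function.Bijective (δ i)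

/-- Coreversibility: `δ_i(y) = δ_{i'}(z)` and `ρ_y(i) = ρ_z(i')` imply `y = z`. -/
def MCoreversible {Q Γ : Type*} (δ : Γ → Q → Q) (ρ : Q → Γ → Γ) : Prop :=
  ∀ y z : Q, ∀ i i' : Γ, δ i y = δ i' z → ρ y i = ρ z i' → y = z

/-- Bireversible: invertible, reversible and coreversible. -/
def MBireversible {Q Γ : Type*} (δ : Γ → Q → Q) (ρ : Q → Γ → Γ) : Prop :=
  MInvertible ρ ∧ MReversible δ ∧ MCoreversible δ ρ

/-- Connectedness: every state is reachable from every state. -/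
def MConnected {Q Γ : Type*} (δ : Γ → Q → Q) : Prop :=
  ∀ x y : Q, ∃ s : List Γ, applyWord δ s x = y

/-- Invertibility of a component `C` (as an automaton with stateset `C`). -/
def CompInvertible {S Γ : Type*} (r : S → Γ → Γ) (C : Set S) : Prop :=
  ∀ x ∈ C, Function.Bijective (r x)

/-- Reversibility of a component `C`: each transition function permutes `C`. -/
def CompReversible {S Γ : Type*} (d : Γ → S → S) (C : Set S) : Prop :=
  ∀ i : Γ, Set.BijOn (d i) C C

/-- Coreversibility of a component `C` (as an automaton with stateset `C`). -/
def CompCoreversible {S Γ : Type*} (d : Γ → S → S) (r : S → Γ → Γ) (C : Set S) : Prop :=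
  ∀ y ∈ C, ∀ z ∈ C, ∀ i i' : Γ, d i y = d i' z → r y i = r z i' → y = z

/-- Bireversibility of a component `C` (as an automaton with stateset `C`). -/
def CompBireversible {S Γ : Type*} (d : Γ → S → S) (r : S → Γ → Γ) (C : Set S) : Prop :=
  CompInvertible r C ∧ CompReversible d C ∧ CompCoreversible d r C

/-- Transition functions of the product `A × B` of two Mealy automata. -/
def prodD {Q Q' Γ : Type*} (δ : Γ → Q → Q) (ρ : Q → Γ → Γ) (δ' : Γ → Q' → Q') :
    Γ → Q × Q' → Q × Q' :=
  fun i p => (δ i p.1, δ' (ρ p.1 i) p.2)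

/-- Output functions of the product `A × B` of two Mealy automata. -/
def prodR {Q Q' Γ : Type*} (ρ : Q → Γ → Γ) (ρ' : Q' → Γ → Γ) : Q × Q' → Γ → Γ :=
  fun p i => ρ' p.2 (ρ p.1 i)

/-- `u^n`: the `n`-fold concatenation of a word with itself. -/
def wordPow {Q : Type*} (u : List Q) : ℕ → List Q
  | 0 => []
  | n + 1 => u ++ wordPow u n

section Lemmas
variable {Q Γ : Type*} (δ : Γ → Q → Q) (ρ : Q → Γ → Γ)

lemma rhoWord_append (a b : List Q) (s : List Γ) :
    rhoWord δ ρ (a ++ b) s = rhoWord δ ρ b (rhoWord δ ρ a s) := by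
  induction a generalizing s with
  | nil => rfl
  | cons x a ih => simp [rhoWord, ih]

lemma rhoWord_single (u : List Q) (i : Γ) :
    rhoWord δ ρ u [i] = [rhoLetter ρ u i] := by
  induction u generalizing i with
  | nil => rfl
  | cons x u ih => simp [rhoWord, rhoLetter, rhoStar, ih]

lemma rhoWord_cons_input (u : List Q) (i : Γ) (s : List Γ) :
    rhoWord δ ρ u (i :: s) = rhoLetter ρ u i :: rhoWord δ ρ (deltaStar δ ρ i u) s := by
  induction u generalizing i s with
  | nil => rfl
  | cons x u ih => simp [rhoWord, rhoLetter, rhoStar, deltaStar, ih]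

lemma deltaStar_length (i : Γ) (u : List Q) : (deltaStar δ ρ i u).length = u.length := by
  induction u generalizing i <;> simp [deltaStar, *]

lemma deltaStar_injective (hRev : MReversible δ) :
    ∀ (u v : List Q) (i : Γ), deltaStar δ ρ i u = deltaStar δ ρ i v → u = v := by
  intro u
  induction u with
  | nil =>
    intro v i h
    cases v with
    | nil => rfl
    | cons x' v => simp [deltaStar] at h
  | cons x u ih =>
    intro v i h
    cases v with
    | nil => simp [deltaStar] at h
    | cons x' v =>
      simp only [deltaStar, List.cons.injEq] at h
      obtain ⟨h1, h2⟩ := h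
      have hx := (hRev i).1 h1
      subst hx
      exact congrArg (x :: ·) (ih v _ h2)

lemma deltaStar_concat (i : Γ) (c : List Q) (w : Q) :
    deltaStar δ ρ i (c ++ [w]) = deltaStar δ ρ i c ++ [δ (rhoLetter ρ c i) w] := by
  induction c generalizing i <;> simp [deltaStar, rhoLetter, *]

lemma rhoLetter_concat (c : List Q) (w : Q) (i : Γ) :
    rhoLetter ρ (c ++ [w]) i = ρ w (rhoLetter ρ c i) := by
  induction c generalizing i <;> simp [rhoLetter, *]

lemma rhoLetter_bijective (hInv : MInvertible ρ) (c : List Q) :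
    Function.Bijective (rhoLetter ρ c) := by
  induction c with
  | nil => exact Function.bijective_id
  | cons x c ih => exact ih.comp (hInv x)

lemma rhoStar_injective (hInv : MInvertible ρ) :
    ∀ (s t : List Γ) (x : Q), rhoStar δ ρ x s = rhoStar δ ρ x t → s = t := by
  intro s
  induction s with
  | nil => intro t x h; cases t with
    | nil => rfl
    | cons j t => simp [rhoStar] at h
  | cons i s ih =>
    intro t x h
    cases t with
    | nil => simp [rhoStar] at h
    | cons j t =>
      simp only [rhoStar, List.cons.injEq] at h
      obtain ⟨h1, h2⟩ := h
      have hij := (hInv x).1 h1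
      subst hij
      exact congrArg (i :: ·) (ih t _ h2)

lemma rhoStar_surjective (hInv : MInvertible ρ) :
    ∀ (t : List Γ) (x : Q), ∃ s, rhoStar δ ρ x s = t := by
  intro t
  induction t with
  | nil => exact fun x => ⟨[], rfl⟩
  | cons j t ih =>
    intro x
    obtain ⟨i, hi⟩ := (hInv x).2 j
    obtain ⟨s, hs⟩ := ih (δ i x)
    exact ⟨i :: s, by simp [rhoStar, hi, hs]⟩

lemma rhoWord_surjective (hInv : MInvertible ρ) :
    ∀ (u : List Q) (t : List Γ), ∃ s, rhoWord δ ρ u s = t := by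
  intro u
  induction u with
  | nil => exact fun t => ⟨t, rfl⟩
  | cons x u ih =>
    intro t
    obtain ⟨s', hs'⟩ := ih t
    obtain ⟨s, hs⟩ := rhoStar_surjective δ ρ hInv s' x
    exact ⟨s, by simp [rhoWord, hs, hs']⟩

lemma rhoWord_strip_last (hInv : MInvertible ρ) (c c' : List Q) (w : Q)
    (h : rhoWord δ ρ (c ++ [w]) = rhoWord δ ρ (c' ++ [w])) :
    rhoWord δ ρ c = rhoWord δ ρ c' := by
  funext s
  have h1 := congrFun h s
  rw [rhoWord_append, rhoWord_append] at h1
  exact rhoStar_injective δ ρ hInv _ _ _ h1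

lemma twin_letter (u v : List Q) (h : rhoWord δ ρ u = rhoWord δ ρ v) (i : Γ) :
    rhoLetter ρ u i = rhoLetter ρ v i := by
  have := congrFun h [i]
  rw [rhoWord_single, rhoWord_single] at this
  exact List.singleton_injective this

lemma twin_delta (u v : List Q) (h : rhoWord δ ρ u = rhoWord δ ρ v) (i : Γ) :
    rhoWord δ ρ (deltaStar δ ρ i u) = rhoWord δ ρ (deltaStar δ ρ i v) := by
  funext s
  have h1 := congrFun h (i :: s)
  rw [rhoWord_cons_input, rhoWord_cons_input] at h1
  exact (List.cons.injEq _ _ _ _ ▸ h1).2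

end Lemmas

lemma third_elt {Q : Type*} [Fintype Q] (hcard : Fintype.card Q = 3) (y z : Q) (hyz : y ≠ z) :
    ∃ e : Q, e ≠ y ∧ e ≠ z ∧ ∀ x : Q, x = y ∨ x = z ∨ x = e := by
  classical
  have hex : ∃ e : Q, e ∉ ({y, z} : Finset Q) := by
    by_contra hx
    push_neg at hx
    have hsub : (Finset.univ : Finset Q) ⊆ {y, z} := fun x _ => hx x
    have := Finset.card_le_card hsub
    rw [Finset.card_univ, hcard] at this
    have h2 : ({y, z} : Finset Q).card ≤ 2 := Finset.card_insert_le _ _ |>.trans (by simp)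
    omega
  obtain ⟨e, he⟩ := hex
  simp only [Finset.mem_insert, Finset.mem_singleton, not_or] at he
  refine ⟨e, he.1, he.2, ?_⟩
  intro x
  by_contra hx
  push_neg at hx
  obtain ⟨h1, h2', h3⟩ := hx
  have hsub : ({y, z, e, x} : Finset Q) ⊆ Finset.univ := Finset.subset_univ _
  have hc : ({y, z, e, x} : Finset Q).card = 4 := by
    rw [Finset.card_insert_of_notMem (by simp [hyz, Ne.symm he.1, Ne.symm h1]),
      Finset.card_insert_of_notMem (by simp [Ne.symm he.2, Ne.symm h2']),
      Finset.card_insert_of_notMem (by simp [Ne.symm h3]), Finset.card_singleton]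
  have := Finset.card_le_card hsub
  rw [hc, Finset.card_univ, hcard] at this
  omega

lemma key_eqlen {Q Γ : Type*} [Fintype Q] [Fintype Γ]
    (δ : Γ → Q → Q) (ρ : Q → Γ → Γ)
    (hcard : Fintype.card Q = 3)
    (hConn : ∀ x y : Q, ∃ s : List Γ, applyWord δ s x = y)
    (hInv : MInvertible ρ) (hRev : MReversible δ)
    (y z : Q) (i₀ i₀' : Γ) (hδ0 : δ i₀ y = δ i₀' z) (hρ0 : ρ y i₀ = ρ z i₀') (hyz : y ≠ z) :
    ∀ (n : ℕ) (u v : List Q), u.length = n → v.length = n →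
      rhoWord δ ρ u = rhoWord δ ρ v → u = v := by
  classical
  intro n
  induction n using Nat.strong_induction_on with
  | _ n ih =>
  intro u v hu hv h
  by_contra hne
  -- n ≥ 1
  obtain ⟨n', rfl⟩ : ∃ n', n = n' + 1 := by
    cases n with
    | zero =>
      exact absurd (by rw [List.length_eq_zero_iff.mp hu, List.length_eq_zero_iff.mp hv]) hne
    | succ k => exact ⟨k, rfl⟩
  -- inverse of ρ x
  set pinv : Q → Γ → Γ := fun x => Function.surjInv (hInv x).2 with hpinvdef
  have hpinv : ∀ x m, ρ x (pinv x m) = m := fun x m => Function.surjInv_eq (hInv x).2 m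
  have hpinv2 : ∀ x k, pinv x (ρ x k) = k := fun x k => (hInv x).1 (by rw [hpinv])
  set T : Γ → Q → Q := fun m x => δ (pinv x m) x with hTdef
  -- the set of last-letter pairs of twins
  set S : Q → Q → Prop := fun w w' => ∃ c c' : List Q,
      c.length = n' ∧ c'.length = n' ∧
      rhoWord δ ρ (c ++ [w]) = rhoWord δ ρ (c' ++ [w']) ∧ c ++ [w] ≠ c' ++ [w'] with hSdef
  -- S is nonempty
  have hS0 : ∃ w w', S w w' := by
    obtain ⟨c, w, rfl⟩ : ∃ c w, u = c ++ [w] := by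
      rcases List.eq_nil_or_concat u with h' | h'
      · rw [h'] at hu; simp at hu
      · simpa only [List.concat_eq_append] using h'
    obtain ⟨c', w', rfl⟩ : ∃ c' w', v = c' ++ [w'] := by
      rcases List.eq_nil_or_concat v with h' | h'
      · rw [h'] at hv; simp at hv
      · simpa only [List.concat_eq_append] using h'
    refine ⟨w, w', c, c', ?_, ?_, h, hne⟩
    · simpa using hu
    · simpa using hv
  -- S is off-diagonal
  have hSoff : ∀ w, ¬ S w w := by
    rintro w ⟨c, c', hc, hc', htwin, hne'⟩
    have := rhoWord_strip_last δ ρ hInv c c' w htwin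
    have hcc : c = c' := ih n' (Nat.lt_succ_self _) c c' hc hc' this
    exact hne' (by rw [hcc])
  -- S is closed under T
  have hSclosed : ∀ w w', S w w' → ∀ m, S (T m w) (T m w') := by
    rintro w w' ⟨c, c', hc, hc', htwin, hne'⟩ m
    obtain ⟨i, hi⟩ := (rhoLetter_bijective ρ hInv c).2 (pinv w m)
    have hlet : rhoLetter ρ c' i = pinv w' m := by
      apply (hInv w').1
      rw [hpinv]
      have h1 := twin_letter δ ρ _ _ htwin i
      rw [rhoLetter_concat, rhoLetter_concat, hi, hpinv] at h1
      exact h1.symm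
    refine ⟨deltaStar δ ρ i c, deltaStar δ ρ i c', ?_, ?_, ?_, ?_⟩
    · rw [deltaStar_length]; exact hc
    · rw [deltaStar_length]; exact hc'
    · have h1 := twin_delta δ ρ _ _ htwin i
      rw [deltaStar_concat, deltaStar_concat, hi, hlet] at h1
      exact h1
    · intro heq
      apply hne'
      have : deltaStar δ ρ i (c ++ [w]) = deltaStar δ ρ i (c' ++ [w']) := by
        rw [deltaStar_concat, deltaStar_concat, hi, hlet]
        exact heq
      exact deltaStar_injective δ ρ hRev _ _ i this
  -- single steps
  have hstep1 : ∀ w w' k, S w w' → S (δ k w) (T (ρ w k) w') := by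
    intro w w' k hS
    have h1 := hSclosed w w' hS (ρ w k)
    have he : T (ρ w k) w = δ k w := by
      simp only [hTdef]
      rw [hpinv2]
    rwa [he] at h1
  have hstep2 : ∀ w w' k, S w w' → S (T (ρ w' k) w) (δ k w') := by
    intro w w' k hS
    have h1 := hSclosed w w' hS (ρ w' k)
    have he : T (ρ w' k) w' = δ k w' := by
      simp only [hTdef]
      rw [hpinv2]
    rwa [he] at h1
  -- reachability closure in each coordinate
  have hpath1 : ∀ (s : List Γ) (w w' : Q), S w w' → ∃ b, S (applyWord δ s w) b := by
    intro s
    induction s with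
    | nil => exact fun w w' hS => ⟨w', hS⟩
    | cons k s ihs =>
      intro w w' hS
      exact ihs _ _ (hstep1 w w' k hS)
  have hpath2 : ∀ (s : List Γ) (w w' : Q), S w w' → ∃ a, S a (applyWord δ s w') := by
    intro s
    induction s with
    | nil => exact fun w w' hS => ⟨w, hS⟩
    | cons k s ihs =>
      intro w w' hS
      exact ihs _ _ (hstep2 w w' k hS)
  have hcov1 : ∀ x : Q, ∃ b, S x b := by
    intro x
    obtain ⟨w0, w0', h0⟩ := hS0
    obtain ⟨s, hs⟩ := hConn w0 x
    obtain ⟨b, hb⟩ := hpath1 s w0 w0' h0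
    rw [hs] at hb
    exact ⟨b, hb⟩
  have hcov2 : ∀ x : Q, ∃ a, S a x := by
    intro x
    obtain ⟨w0, w0', h0⟩ := hS0
    obtain ⟨s, hs⟩ := hConn w0' x
    obtain ⟨a, ha⟩ := hpath2 s w0 w0' h0
    rw [hs] at ha
    exact ⟨a, ha⟩
  -- the merging pair and its swap are not in S
  have hTm : T (ρ y i₀) y = δ i₀ y := by
    simp only [hTdef]; rw [hpinv2]
  have hTm' : T (ρ y i₀) z = δ i₀' z := by
    simp only [hTdef]; rw [hρ0, hpinv2]
  have hSyz : ¬ S y z := by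
    intro hS
    have h1 := hSclosed y z hS (ρ y i₀)
    rw [hTm, hTm', ← hδ0] at h1
    exact hSoff _ h1
  have hSzy : ¬ S z y := by
    intro hS
    have h1 := hSclosed z y hS (ρ y i₀)
    rw [hTm, hTm', hδ0] at h1
    exact hSoff _ h1
  -- third element
  obtain ⟨e, hey, hez, htri⟩ := third_elt hcard y z hyz
  -- characterization of S
  have hchar : ∀ a b, S a b → (a = e ∧ (b = y ∨ b = z)) ∨ (b = e ∧ (a = y ∨ a = z)) := by
    intro a b hS
    have hab : a ≠ b := by rintro rfl; exact hSoff _ hS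
    rcases htri a with ha | ha | ha <;> rcases htri b with hb | hb | hb <;> subst ha <;> subst hb
    · exact absurd rfl hab
    · exact absurd hS hSyz
    · exact Or.inr ⟨rfl, Or.inl rfl⟩
    · exact absurd hS hSzy
    · exact absurd rfl hab
    · exact Or.inr ⟨rfl, Or.inr rfl⟩
    · exact Or.inl ⟨rfl, Or.inl rfl⟩
    · exact Or.inl ⟨rfl, Or.inr rfl⟩
    · exact absurd rfl hab
  have hSye : S y e := by
    obtain ⟨b, hb⟩ := hcov1 y
    rcases hchar y b hb with ⟨h1, _⟩ | ⟨h1, _⟩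
    · exact absurd h1.symm hey
    · rwa [h1] at hb
  have hSze : S z e := by
    obtain ⟨b, hb⟩ := hcov1 z
    rcases hchar z b hb with ⟨h1, _⟩ | ⟨h1, _⟩
    · exact absurd h1.symm hez
    · rwa [h1] at hb
  -- dichotomy: every output letter has type I or type II
  have hdich : ∀ m, (T m e = e ∧ T m y ≠ e ∧ T m z ≠ e) ∨ (T m e ≠ e ∧ T m y = e ∧ T m z = e) := by
    intro m
    have h1 := hSclosed _ _ hSye m
    have h2 := hSclosed _ _ hSze m
    by_cases hte : T m e = e
    · left
      refine ⟨hte, ?_, ?_⟩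
      · rcases hchar _ _ h1 with ⟨_, hb⟩ | ⟨_, hb⟩
        · rcases hb with hb | hb
          · rw [hte] at hb; exact absurd hb hey
          · rw [hte] at hb; exact absurd hb hez
        · rcases hb with hb | hb
          · rw [hb]; exact fun hcon => hey hcon.symm
          · rw [hb]; exact fun hcon => hez hcon.symm
      · rcases hchar _ _ h2 with ⟨_, hb⟩ | ⟨_, hb⟩
        · rcases hb with hb | hb
          · rw [hte] at hb; exact absurd hb hey
          · rw [hte] at hb; exact absurd hb hez
        · rcases hb with hb | hb
          · rw [hb]; exact fun hcon => hey hcon.symm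
          · rw [hb]; exact fun hcon => hez hcon.symm
    · right
      refine ⟨hte, ?_, ?_⟩
      · rcases hchar _ _ h1 with ⟨ha, _⟩ | ⟨hb, _⟩
        · exact ha
        · exact absurd hb hte
      · rcases hchar _ _ h2 with ⟨ha, _⟩ | ⟨hb, _⟩
        · exact ha
        · exact absurd hb hte
  -- counting
  set II : Finset Γ := Finset.univ.filter (fun m => T m e ≠ e) with hIIdef
  set Ly : Finset Γ := Finset.univ.filter (fun k => δ k y = e) with hLydef
  set Lz : Finset Γ := Finset.univ.filter (fun k => δ k z = e) with hLzdef
  set Le : Finset Γ := Finset.univ.filter (fun k => δ k e = e) with hLedef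
  have hIIy : II = Ly.image (ρ y) := by
    ext m
    simp only [hIIdef, hLydef, Finset.mem_filter, Finset.mem_univ, true_and, Finset.mem_image]
    constructor
    · intro hm
      rcases hdich m with ⟨h1, _, _⟩ | ⟨_, h2, _⟩
      · exact absurd h1 hm
      · refine ⟨pinv y m, ?_, hpinv y m⟩
        simpa only [hTdef] using h2
    · rintro ⟨k, hk, rfl⟩
      rcases hdich (ρ y k) with ⟨_, h2, _⟩ | ⟨h1, _, _⟩
      · exfalso; apply h2; simp only [hTdef]; rw [hpinv2]; exact hk
      · exact h1
  have hIIz : II = Lz.image (ρ z) := by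
    ext m
    simp only [hIIdef, hLzdef, Finset.mem_filter, Finset.mem_univ, true_and, Finset.mem_image]
    constructor
    · intro hm
      rcases hdich m with ⟨h1, _, _⟩ | ⟨_, _, h2⟩
      · exact absurd h1 hm
      · refine ⟨pinv z m, ?_, hpinv z m⟩
        simpa only [hTdef] using h2
    · rintro ⟨k, hk, rfl⟩
      rcases hdich (ρ z k) with ⟨_, _, h2⟩ | ⟨h1, _, _⟩
      · exfalso; apply h2; simp only [hTdef]; rw [hpinv2]; exact hk
      · exact h1
  have hIIe : II = (Finset.univ \ Le).image (ρ e) := by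
    ext m
    simp only [hIIdef, hLedef, Finset.mem_filter, Finset.mem_univ, true_and, Finset.mem_image,
      Finset.mem_sdiff]
    constructor
    · intro hm
      refine ⟨pinv e m, ?_, hpinv e m⟩
      simpa only [hTdef] using hm
    · rintro ⟨k, hk, rfl⟩
      intro hcon
      apply hk
      have : T (ρ e k) e = δ k e := by simp only [hTdef]; rw [hpinv2]
      rw [this] at hcon
      exact hcon
  have hc1 : II.card = Ly.card := by
    rw [hIIy, Finset.card_image_of_injective _ (hInv y).1]
  have hc2 : II.card = Lz.card := by
    rw [hIIz, Finset.card_image_of_injective _ (hInv z).1]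
  have hc3 : II.card = Fintype.card Γ - Le.card := by
    rw [hIIe, Finset.card_image_of_injective _ (hInv e).1,
      Finset.card_sdiff_of_subset (Finset.subset_univ _), Finset.card_univ]
  have hc5 : Le.card ≤ Fintype.card Γ := by
    rw [← Finset.card_univ]; exact Finset.card_le_card (Finset.subset_univ _)
  have hpart : Ly.card + Lz.card + Le.card = Fintype.card Γ := by
    have hdisj1 : Disjoint Ly Lz := by
      rw [Finset.disjoint_left]
      intro k hk1 hk2
      simp only [hLydef, hLzdef, Finset.mem_filter, Finset.mem_univ, true_and] at hk1 hk2
      exact hyz ((hRev k).1 (hk1.trans hk2.symm))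
    have hdisj2 : Disjoint (Ly ∪ Lz) Le := by
      rw [Finset.disjoint_left]
      intro k hk1 hk2
      simp only [hLydef, hLzdef, hLedef, Finset.mem_union, Finset.mem_filter,
        Finset.mem_univ, true_and] at hk1 hk2
      rcases hk1 with hk1 | hk1
      · exact hey ((hRev k).1 (hk2.trans hk1.symm))
      · exact hez ((hRev k).1 (hk2.trans hk1.symm))
    have huniv : Ly ∪ Lz ∪ Le = Finset.univ := by
      apply Finset.eq_univ_of_forall
      intro k
      simp only [hLydef, hLzdef, hLedef, Finset.mem_union, Finset.mem_filter,
        Finset.mem_univ, true_and]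
      obtain ⟨x, hx⟩ := (hRev k).2 e
      rcases htri x with rfl | rfl | rfl
      · exact Or.inl (Or.inl hx)
      · exact Or.inl (Or.inr hx)
      · exact Or.inr hx
    have := Finset.card_union_of_disjoint hdisj2
    rw [Finset.card_union_of_disjoint hdisj1, huniv, Finset.card_univ] at this
    omega
  have hIIzero : II.card = 0 := by omega
  have hLyempty : Ly.card = 0 := by omega
  have hLzempty : Lz.card = 0 := by omega
  have hLy : ∀ k, δ k y ≠ e := by
    intro k hk
    have hmem : k ∈ Ly := by
      simp only [hLydef, Finset.mem_filter, Finset.mem_univ, true_and]; exact hk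
    rw [Finset.card_eq_zero.mp hLyempty] at hmem
    exact absurd hmem (Finset.notMem_empty k)
  have hLz : ∀ k, δ k z ≠ e := by
    intro k hk
    have hmem : k ∈ Lz := by
      simp only [hLzdef, Finset.mem_filter, Finset.mem_univ, true_and]; exact hk
    rw [Finset.card_eq_zero.mp hLzempty] at hmem
    exact absurd hmem (Finset.notMem_empty k)
  -- {y, z} is closed under transitions: contradiction with connectivity
  have hstay : ∀ (s : List Γ) (x : Q), (x = y ∨ x = z) →
      (applyWord δ s x = y ∨ applyWord δ s x = z) := by
    intro s
    induction s with
    | nil => exact fun x hx => hx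
    | cons k s ihs =>
      intro x hx
      apply ihs
      rcases htri (δ k x) with h | h | h
      · exact Or.inl h
      · exact Or.inr h
      · exfalso
        rcases hx with rfl | rfl
        · exact hLy k h
        · exact hLz k h
  obtain ⟨s, hs⟩ := hConn y e
  rcases hstay s y (Or.inl rfl) with hcon | hcon
  · rw [hs] at hcon; exact hey hcon
  · rw [hs] at hcon; exact hez hcon

/-- A connected 3-state invertible reversible
non-bireversible Mealy automaton generates a free semigroup: the map
`u ↦ ρ_u` is injective on nonempty words. -/
theorem free_semigroup_of_connected_three_state
    {Q Γ : Type*} [Fintype Q] [Fintype Γ] [Nonempty Q] [Nonempty Γ]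
    (δ : Γ → Q → Q) (ρ : Q → Γ → Γ)
    (hcard : Fintype.card Q = 3)
    (hConn : MConnected δ) (hInv : MInvertible ρ) (hRev : MReversible δ)
    (hNotBir : ¬ MBireversible δ ρ) :
    ∀ u v : List Q, u ≠ [] → v ≠ [] → rhoWord δ ρ u = rhoWord δ ρ v → u = v := by
  classical
  have hncor : ¬ MCoreversible δ ρ := fun hc => hNotBir ⟨hInv, hRev, hc⟩
  unfold MCoreversible at hncor
  push_neg at hncor
  obtain ⟨y, z, i₀, i₀', hδ0, hρ0, hyz⟩ := hncor
  have key := key_eqlen δ ρ hcard hConn hInv hRev y z i₀ i₀' hδ0 hρ0 hyz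
  have hlt : ∀ u v : List Q, u ≠ [] → u.length < v.length →
      rhoWord δ ρ u = rhoWord δ ρ v → False := by
    intro u v hu hlen h
    have hcomm : u ++ v = v ++ u := by
      apply key (u.length + v.length) _ _ (by simp) (by simp [Nat.add_comm])
      funext s
      rw [rhoWord_append, rhoWord_append, h, ← h]
    have hpre : u <+: v := by
      have h1 : u <+: v ++ u := hcomm ▸ List.prefix_append u v
      exact List.prefix_of_prefix_length_le h1 (List.prefix_append v u) (le_of_lt hlen)
    obtain ⟨w, rfl⟩ := hpre
    have hid : ∀ t, rhoWord δ ρ w t = t := by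
      intro t
      obtain ⟨s, rfl⟩ := rhoWord_surjective δ ρ hInv u t
      have h2 := congrFun h s
      rw [rhoWord_append] at h2
      exact h2.symm
    cases w with
    | nil => simp at hlen
    | cons w1 w2 =>
      obtain ⟨x, hx⟩ : ∃ x : Q, x ≠ w1 :=
        Fintype.exists_ne_of_one_lt_card (by omega) w1
      have heq : x :: (w1 :: w2) = (w1 :: w2) ++ [x] := by
        apply key ((w1 :: w2).length + 1) _ _ (by simp) (by simp)
        funext s
        show rhoWord δ ρ ([x] ++ (w1 :: w2)) s = rhoWord δ ρ ((w1 :: w2) ++ [x]) s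
        rw [rhoWord_append, rhoWord_append, hid, hid]
      rw [List.cons_append] at heq
      injection heq with h1 _
      exact hx h1
  intro u v hu hv h
  rcases Nat.lt_trichotomy u.length v.length with hl | hl | hl
  · exact (hlt u v hu hl h).elim
  · exact key u.length u v rfl hl.symm h
  · exact (hlt v u hv hl h.symm).elim
end

section
/- Let A = (Q, Σ, δ, ρ) and B = (Q′, Σ, δ′, ρ′) be reversible Mealy automata on the same alphabet. If A is connected and non-coreversible, then every connected component of the product A × B, viewed as a Mealy automaton, is reversible and non-coreversible. -/
theorem applyWord_append' {S Γ : Type*} (d : Γ → S → S) (s t : List Γ) (x : S) :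
    applyWord d (s ++ t) x = applyWord d t (applyWord d s x) := by
  induction s generalizing x with
  | nil => rfl
  | cons i s ih => simp [applyWord, ih]

theorem orbit_closed' {S Γ : Type*} (d : Γ → S → S) {p x : S}
    (hx : x ∈ orbitOf d p) (i : Γ) : d i x ∈ orbitOf d p := by
  obtain ⟨s, hs⟩ := hx
  exact ⟨s ++ [i], by rw [applyWord_append', hs]; rfl⟩

theorem fst_applyWord' {Q Q' Γ : Type*} (δ : Γ → Q → Q) (ρ : Q → Γ → Γ)
    (δ' : Γ → Q' → Q') (s : List Γ) (x : Q) (w : Q') :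
    (applyWord (prodD δ ρ δ') s (x, w)).1 = applyWord δ s x := by
  induction s generalizing x w with
  | nil => rfl
  | cons i s ih => exact ih (δ i x) (δ' (ρ x i) w)

/-- If `A` and `B` are reversible Mealy automata on the same
alphabet and `A` is connected and non-coreversible, then every connected
component of `A × B` is reversible and non-coreversible. -/
theorem product_component_reversible_noncoreversible
    {Q Q' Γ : Type*} [Fintype Q] [Fintype Q'] [Fintype Γ]
    [Nonempty Q] [Nonempty Q'] [Nonempty Γ]
    (δ : Γ → Q → Q) (ρ : Q → Γ → Γ) (δ' : Γ → Q' → Q') (ρ' : Q' → Γ → Γ)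
    (hRevA : MReversible δ) (hRevB : MReversible δ')
    (hConnA : MConnected δ) (hNotCorA : ¬ MCoreversible δ ρ) :
    ∀ p : Q × Q',
      CompReversible (prodD δ ρ δ') (orbitOf (prodD δ ρ δ') p) ∧
      ¬ CompCoreversible (prodD δ ρ δ') (prodR ρ ρ') (orbitOf (prodD δ ρ δ') p) := by
  have hinj : ∀ i : Γ, Function.Injective (prodD δ ρ δ' i) := by
    intro i a b h
    have h1 : δ i a.1 = δ i b.1 := congrArg Prod.fst h
    have hfst : a.1 = b.1 := (hRevA i).injective h1
    have h2 : δ' (ρ a.1 i) a.2 = δ' (ρ b.1 i) b.2 := congrArg Prod.snd h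
    rw [hfst] at h2
    have hsnd : a.2 = b.2 := (hRevB (ρ b.1 i)).injective h2
    exact Prod.ext hfst hsnd
  intro p
  set C := orbitOf (prodD δ ρ δ') p with hC
  have hmem : p ∈ C := ⟨[], rfl⟩
  have hbij : ∀ i : Γ, Set.BijOn (prodD δ ρ δ' i) C C := by
    intro i
    have hmt : Set.MapsTo (prodD δ ρ δ' i) C C := fun x hx => orbit_closed' _ hx i
    exact (Set.Finite.injOn_iff_bijOn_of_mapsTo (Set.toFinite C) hmt).mp
      ((hinj i).injOn)
  refine ⟨hbij, ?_⟩
  -- extract the coreversibility counterexample in A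
  have : ∃ y z : Q, ∃ i i' : Γ, δ i y = δ i' z ∧ ρ y i = ρ z i' ∧ y ≠ z := by
    by_contra h
    push_neg at h
    exact hNotCorA fun y z i i' h1 h2 => h y z i i' h1 h2
  obtain ⟨y, z, i, i', hδ, hρ, hne⟩ := this
  -- find (y, b) ∈ C
  obtain ⟨s, hs⟩ := hConnA p.1 y
  set q := applyWord (prodD δ ρ δ') s p with hq
  have hqC : q ∈ C := ⟨s, rfl⟩
  have hq1 : q.1 = y := by
    rw [hq]
    have := fst_applyWord' δ ρ δ' s p.1 p.2
    rwa [hs] at this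
  set b := q.2 with hb
  have hybC : (y, b) ∈ C := by
    have : q = (y, b) := Prod.ext hq1 rfl
    rwa [this] at hqC
  -- (z, b) ∈ C via reverse transition
  have hWC : prodD δ ρ δ' i (y, b) ∈ C := orbit_closed' _ hybC i
  obtain ⟨u, huC, hu⟩ := (hbij i').surjOn hWC
  have hzbC : (z, b) ∈ C := by
    have h1 : δ i' u.1 = δ i' z := by
      have := congrArg Prod.fst hu
      simp only [prodD] at this
      rw [this, ← hδ]
    have hu1 : u.1 = z := (hRevA i').injective h1
    have h2 : δ' (ρ u.1 i') u.2 = δ' (ρ y i) b := congrArg Prod.snd hu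
    rw [hu1, ← hρ] at h2
    have hu2 : u.2 = b := (hRevB (ρ y i)).injective h2
    have : u = (z, b) := Prod.ext hu1 hu2
    rwa [this] at huC
  -- refute coreversibility
  intro hcor
  apply hne
  have key : ((y, b) : Q × Q') = (z, b) := by
    apply hcor (y, b) hybC (z, b) hzbC i i'
    · simp only [prodD, hδ, hρ]
    · simp only [prodR, hρ]
  exact congrArg Prod.fst key
end
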